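/- Let G be a compact Hausdorff group, U a continuous unitary representation of G on a complex Hilbert space 𝓗, and let H₁ ⊆ H₂ be closed subgroups of G. Then for every continuous finite-dimensional irreducible unitary representation σ of H₁ and every continuous finite-dimensional irreducible unitary representation τ of H₂, the isotypical projections commute: p_σ ∘ p_τ = p_τ ∘ p_σ as bounded operators on 𝓗. -/

import Mathlib

open MeasureTheory ComplexConjugate Matrix

noncomputable section

/-- A continuous finite-dimensional unitary (matrix) representation of a topological group. -/
structure FinUnitaryRep (Γ : Type) [Group Γ] [TopologicalSpace Γ] where
  dim : ℕ
  ρ : Γ →* Matrix.unitaryGroup (Fin dim) ℂ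
  cont : Continuous fun g => (ρ g : Matrix (Fin dim) (Fin dim) ℂ)

namespace FinUnitaryRep

variable {Γ : Type} [Group Γ] [TopologicalSpace Γ]

/-- The character of a finite-dimensional representation. -/
def char (σ : FinUnitaryRep Γ) : Γ → ℂ :=
  fun g => Matrix.trace ((σ.ρ g : Matrix (Fin σ.dim) (Fin σ.dim) ℂ))

/-- Irreducibility: no nontrivial invariant subspace (and nonzero). -/
def IsIrreducible (σ : FinUnitaryRep Γ) : Prop :=
  0 < σ.dim ∧ ∀ W : Submodule ℂ (Fin σ.dim → ℂ),
    (∀ g : Γ, ∀ v ∈ W, Matrix.mulVec ((σ.ρ g : Matrix (Fin σ.dim) (Fin σ.dim) ℂ)) v ∈ W) →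
    W = ⊥ ∨ W = ⊤

/-- Restriction of a representation along a continuous group homomorphism. -/
@[reducible] def res {Δ : Type} [Group Δ] [TopologicalSpace Δ] (f : Δ →* Γ) (hf : Continuous f)
    (π : FinUnitaryRep Γ) : FinUnitaryRep Δ :=
  ⟨π.dim, π.ρ.comp f, π.cont.comp hf⟩

end FinUnitaryRep

variable {Γ : Type} [Group Γ] [TopologicalSpace Γ] [MeasurableSpace Γ]

/-- The isotypical projection `p_σ = (dim σ) ∫ conj (χ_σ h) U h dμ(h)` associated to an
irreducible representation `σ`, for a representation `U` on a normed space. -/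
def isoProj (μ : Measure Γ) {E : Type} [NormedAddCommGroup E] [NormedSpace ℂ E]
    (U : Γ →* (E →L[ℂ] E)) (σ : FinUnitaryRep Γ) : E →L[ℂ] E :=
  (σ.dim : ℂ) • ∫ h, (conj (σ.char h)) • U h ∂μ

/-- The isotypical projection on the representation space of a finite-dimensional
representation `π`, associated to an irreducible representation `σ`. -/
def isoVecProj (μ : Measure Γ) (π : FinUnitaryRep Γ) (σ : FinUnitaryRep Γ)
    (v : Fin π.dim → ℂ) : Fin π.dim → ℂ :=
  (σ.dim : ℂ) • ∫ h, (conj (σ.char h)) • Matrix.mulVec ((π.ρ h : Matrix (Fin π.dim) (Fin π.dim) ℂ)) v ∂μ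

variable {E₁ E₂ : Type} [NormedAddCommGroup E₁] [NormedSpace ℂ E₁]
  [NormedAddCommGroup E₂] [NormedSpace ℂ E₂]

/-- `B` is harmonically finite if `p_σ B p_τ = 0` for all but finitely many pairs of
(unitary equivalence classes of) irreducible representations, identified by their characters. -/
def HarmonicallyFinite (μ : Measure Γ) (U₁ : Γ →* (E₁ →L[ℂ] E₁)) (U₂ : Γ →* (E₂ →L[ℂ] E₂))
    (B : E₁ →L[ℂ] E₂) : Prop :=
  {χ : (Γ → ℂ) × (Γ → ℂ) | ∃ σ τ : FinUnitaryRep Γ, σ.IsIrreducible ∧ τ.IsIrreducible ∧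
    χ.1 = σ.char ∧ χ.2 = τ.char ∧
    (isoProj μ U₂ σ).comp (B.comp (isoProj μ U₁ τ)) ≠ 0}.Finite

/-- `B` is harmonically proper if each row and column of its harmonic matrix is finite. -/
def HarmonicallyProper (μ : Measure Γ) (U₁ : Γ →* (E₁ →L[ℂ] E₁)) (U₂ : Γ →* (E₂ →L[ℂ] E₂))
    (B : E₁ →L[ℂ] E₂) : Prop :=
  ∀ σ : FinUnitaryRep Γ, σ.IsIrreducible →
    {χ : Γ → ℂ | ∃ τ : FinUnitaryRep Γ, τ.IsIrreducible ∧ χ = τ.char ∧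
      ((isoProj μ U₂ σ).comp (B.comp (isoProj μ U₁ τ)) ≠ 0 ∨
       (isoProj μ U₂ τ).comp (B.comp (isoProj μ U₁ σ)) ≠ 0)}.Finite

/-- The operator-norm closure of the harmonically finite operators. -/
def KH (μ : Measure Γ) (U₁ : Γ →* (E₁ →L[ℂ] E₁)) (U₂ : Γ →* (E₂ →L[ℂ] E₂)) :
    Set (E₁ →L[ℂ] E₂) :=
  closure {B | HarmonicallyFinite μ U₁ U₂ B}

/-- The operator-norm closure of the harmonically proper operators. -/
def AH (μ : Measure Γ) (U₁ : Γ →* (E₁ →L[ℂ] E₁)) (U₂ : Γ →* (E₂ →L[ℂ] E₂)) :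
    Set (E₁ →L[ℂ] E₂) :=
  closure {B | HarmonicallyProper μ U₁ U₂ B}

end

lemma char_conj_eq {Γ : Type} [Group Γ] [TopologicalSpace Γ] (τ : FinUnitaryRep Γ)
    (g h : Γ) : τ.char (g * h * g⁻¹) = τ.char h := by
  unfold FinUnitaryRep.char
  have h1 : τ.ρ (g * h * g⁻¹) = τ.ρ g * τ.ρ (h * g⁻¹) := by
    rw [← _root_.map_mul, mul_assoc]
  have h2 : τ.ρ (h * g⁻¹) * τ.ρ g = τ.ρ h := by
    rw [← _root_.map_mul, inv_mul_cancel_right]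
  rw [h1]
  push_cast
  rw [Matrix.trace_mul_comm]
  rw [show (↑(τ.ρ (h * g⁻¹)) : Matrix (Fin τ.dim) (Fin τ.dim) ℂ) * ↑(τ.ρ g) = ↑(τ.ρ h) by
    push_cast [← h2]; ring_nf]

lemma isoProj_comm_of_integrable {Γ : Type} [Group Γ] [TopologicalSpace Γ]
    [MeasurableSpace Γ] (μ : MeasureTheory.Measure Γ)
    [MeasurableMul Γ] [μ.IsMulLeftInvariant] [μ.IsMulRightInvariant]
    {E : Type} [NormedAddCommGroup E] [NormedSpace ℂ E] [CompleteSpace E]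
    (V : Γ →* (E →L[ℂ] E)) (τ : FinUnitaryRep Γ)
    (hInt : MeasureTheory.Integrable (fun h => (conj (τ.char h)) • V h) μ) (g : Γ) :
    (V g).comp (isoProj μ V τ) = (isoProj μ V τ).comp (V g) := by
  set c : Γ → ℂ := fun h => conj (τ.char h) with hc
  have hL : (V g).comp (isoProj μ V τ)
      = (τ.dim : ℂ) • ∫ h, c h • V (g * h) ∂μ := by
    unfold isoProj
    rw [ContinuousLinearMap.comp_smul]
    congr 1
    have := (ContinuousLinearMap.compL ℂ E E E (V g)).integral_comp_comm hInt
    rw [← ContinuousLinearMap.compL_apply, ← this]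
    congr 1
    ext h : 1
    simp [ContinuousLinearMap.compL_apply, ← ContinuousLinearMap.mul_def, ← _root_.map_mul]
    rfl
  have hR : (isoProj μ V τ).comp (V g)
      = (τ.dim : ℂ) • ∫ h, c h • V (h * g) ∂μ := by
    unfold isoProj
    rw [ContinuousLinearMap.smul_comp]
    congr 1
    have := ((ContinuousLinearMap.compL ℂ E E E).flip (V g)).integral_comp_comm hInt
    have e : (∫ (h : Γ), (conj (τ.char h)) • V h ∂μ).comp (V g)
        = ((ContinuousLinearMap.compL ℂ E E E).flip (V g))
            (∫ (h : Γ), (conj (τ.char h)) • V h ∂μ) := rfl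
    rw [e, ← this]
    congr 1
    ext h : 1
    simp [ContinuousLinearMap.compL_apply, ← ContinuousLinearMap.mul_def, ← _root_.map_mul]
    rfl
  rw [hL, hR]
  congr 1
  have e1 : ∫ h, c (h * g⁻¹) • V (h * g⁻¹ * g) ∂μ = ∫ h, c h • V (h * g) ∂μ :=
    MeasureTheory.integral_mul_right_eq_self (fun h => c h • V (h * g)) g⁻¹
  have e2 : ∫ h, c (g * h * g⁻¹) • V (g * h * g⁻¹ * g) ∂μ
      = ∫ h, c (h * g⁻¹) • V (h * g⁻¹ * g) ∂μ :=
    MeasureTheory.integral_mul_left_eq_self (fun h => c (h * g⁻¹) • V (h * g⁻¹ * g)) g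
  rw [← e1, ← e2]
  congr 1
  ext h
  have h3 : g * h * g⁻¹ * g = g * h := by group
  rw [h3, hc]
  simp only []
  rw [char_conj_eq]


theorem isotypical_projections_commute_of_nested_subgroups
    {G : Type} [Group G] [TopologicalSpace G] [IsTopologicalGroup G]
    [CompactSpace G] [T2Space G]
    {𝓗 : Type} [NormedAddCommGroup 𝓗] [InnerProductSpace ℂ 𝓗] [CompleteSpace 𝓗]
    (U : G →* (𝓗 →L[ℂ] 𝓗))
    (hUcont : ∀ ξ : 𝓗, Continuous fun g => U g ξ)
    (hUunit : ∀ (g : G) (x y : 𝓗), inner ℂ (U g x) (U g y) = (inner ℂ x y : ℂ))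
    (H₁ H₂ : Subgroup G) (hH₁ : IsClosed (H₁ : Set G)) (hH₂ : IsClosed (H₂ : Set G))
    (hle : H₁ ≤ H₂)
    [MeasurableSpace H₁] [BorelSpace H₁]
    (μ₁ : Measure H₁) [μ₁.IsHaarMeasure] [IsProbabilityMeasure μ₁]
    [MeasurableSpace H₂] [BorelSpace H₂]
    (μ₂ : Measure H₂) [μ₂.IsHaarMeasure] [IsProbabilityMeasure μ₂]
    (σ : FinUnitaryRep H₁) (hσ : σ.IsIrreducible)
    (τ : FinUnitaryRep H₂) (hτ : τ.IsIrreducible) :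
    (isoProj μ₁ (U.comp H₁.subtype) σ).comp (isoProj μ₂ (U.comp H₂.subtype) τ) =
      (isoProj μ₂ (U.comp H₂.subtype) τ).comp (isoProj μ₁ (U.comp H₁.subtype) σ) := by
  classical
  haveI hC1 : CompactSpace H₁ := isCompact_iff_compactSpace.mp (hH₁.isCompact)
  haveI hC2 : CompactSpace H₂ := isCompact_iff_compactSpace.mp (hH₂.isCompact)
  set V₁ : H₁ →* (𝓗 →L[ℂ] 𝓗) := U.comp H₁.subtype with hV₁
  set V₂ : H₂ →* (𝓗 →L[ℂ] 𝓗) := U.comp H₂.subtype with hV₂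
  by_cases hInt₂ : MeasureTheory.Integrable (fun h : H₂ => (conj (τ.char h)) • V₂ h) μ₂
  swap
  · have hz : isoProj μ₂ V₂ τ = 0 := by
      unfold isoProj
      rw [MeasureTheory.integral_undef hInt₂, smul_zero]
    rw [hz, ContinuousLinearMap.comp_zero, ContinuousLinearMap.zero_comp]
  by_cases hInt₁ : MeasureTheory.Integrable (fun h : H₁ => (conj (σ.char h)) • V₁ h) μ₁
  swap
  · have hz : isoProj μ₁ V₁ σ = 0 := by
      unfold isoProj
      rw [MeasureTheory.integral_undef hInt₁, smul_zero]
    rw [hz, ContinuousLinearMap.comp_zero, ContinuousLinearMap.zero_comp]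
  haveI : μ₂.IsMulRightInvariant := by
    constructor
    intro g
    haveI : MeasureTheory.IsProbabilityMeasure (μ₂.map (· * g)) :=
      MeasureTheory.Measure.isProbabilityMeasure_map (measurable_mul_const g).aemeasurable
    exact MeasureTheory.Measure.isHaarMeasure_eq_of_isProbabilityMeasure _ _
  -- each V₁ h commutes with the τ-projection, since h ∈ H₂
  have comm : ∀ h : H₁, (V₁ h).comp (isoProj μ₂ V₂ τ) = (isoProj μ₂ V₂ τ).comp (V₁ h) := by
    intro h
    have : V₁ h = V₂ (Subgroup.inclusion hle h) := rfl
    rw [this]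
    exact isoProj_comm_of_integrable μ₂ V₂ τ hInt₂ _
  set P : 𝓗 →L[ℂ] 𝓗 := isoProj μ₂ V₂ τ with hP
  have hL : (isoProj μ₁ V₁ σ).comp P
      = (σ.dim : ℂ) • ∫ h, (conj (σ.char h)) • ((V₁ h).comp P) ∂μ₁ := by
    unfold isoProj
    rw [ContinuousLinearMap.smul_comp]
    congr 1
    have := ((ContinuousLinearMap.compL ℂ 𝓗 𝓗 𝓗).flip P).integral_comp_comm hInt₁
    have e : (∫ (h : H₁), (conj (σ.char h)) • V₁ h ∂μ₁).comp P
        = ((ContinuousLinearMap.compL ℂ 𝓗 𝓗 𝓗).flip P)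
            (∫ (h : H₁), (conj (σ.char h)) • V₁ h ∂μ₁) := rfl
    rw [e, ← this]
    refine MeasureTheory.integral_congr_ae (Filter.Eventually.of_forall fun h => ?_)
    simp [ContinuousLinearMap.compL_apply, ContinuousLinearMap.flip_apply]
  have hR : P.comp (isoProj μ₁ V₁ σ)
      = (σ.dim : ℂ) • ∫ h, (conj (σ.char h)) • (P.comp (V₁ h)) ∂μ₁ := by
    unfold isoProj
    rw [ContinuousLinearMap.comp_smul]
    congr 1
    have := (ContinuousLinearMap.compL ℂ 𝓗 𝓗 𝓗 P).integral_comp_comm hInt₁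
    rw [← ContinuousLinearMap.compL_apply, ← this]
    congr 1
    ext h : 1
    simp [ContinuousLinearMap.compL_apply]
  rw [hL, hR]
  congr 1
  congr 1
  ext h
  rw [comm h]
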